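/- Let {Y_t} be a stationary process on a finite alphabet {1,...,K} with stationary distribution p_i = P(Y_t = i) and self-transition probabilities p_{i→i} = P(Y_t = i | Y_{t-1} = i) (with p_{i→i} defined arbitrarily if p_i = 0). Define the binary KL divergence d(a||b) = a log(a/b) + (1−a) log((1−a)/(1−b)). Then ∑_i p_i · d(p_{i→i} || p_i) ≤ I(Y_t; Y_{t-1}). -/

import Mathlib

/-- Log-sum inequality (Gibbs). -/
lemma log_sum_aux {ι : Type*} (s : Finset ι) (a b : ι → ℝ)
    (ha : ∀ i ∈ s, 0 ≤ a i) (hb : ∀ i ∈ s, 0 < b i) :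
    (∑ i ∈ s, a i) * Real.log ((∑ i ∈ s, a i) / (∑ i ∈ s, b i)) ≤
      ∑ i ∈ s, a i * Real.log (a i / b i) := by
  set A := ∑ i ∈ s, a i with hA
  set B := ∑ i ∈ s, b i with hB
  rcases eq_or_lt_of_le (Finset.sum_nonneg ha) with h0 | hApos
  · have hall : ∀ i ∈ s, a i = 0 := by
      intro i hi
      exact (Finset.sum_eq_zero_iff_of_nonneg ha).1 h0.symm i hi
    have hA0 : A = 0 := hA.trans h0.symm
    rw [hA0]
    simp only [zero_mul]
    apply Finset.sum_nonneg
    intro i hi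
    rw [hall i hi]; simp
  · have hsne : s.Nonempty := by
      by_contra h
      rw [Finset.not_nonempty_iff_eq_empty] at h
      simp [hA, h] at hApos
    have hBpos : 0 < B := Finset.sum_pos hb hsne
    have key : ∀ i ∈ s, a i - A * b i / B ≤
        a i * Real.log (a i / b i) - a i * Real.log (A / B) := by
      intro i hi
      have hbpos := hb i hi
      rcases eq_or_lt_of_le (ha i hi) with h0 | hpos
      · rw [← h0]
        simp only [zero_mul, zero_sub, sub_zero, zero_div]
        have : 0 ≤ A * b i / B :=
          div_nonneg (mul_nonneg hApos.le hbpos.le) hBpos.le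
        linarith
      · have hAb : (0:ℝ) < A * b i := mul_pos hApos hbpos
        have hBa : (0:ℝ) < B * a i := mul_pos hBpos hpos
        have hx : 0 < A * b i / (B * a i) := div_pos hAb hBa
        have hlog := Real.log_le_sub_one_of_pos hx
        have hEq : Real.log (A * b i / (B * a i)) =
            Real.log (A / B) - Real.log (a i / b i) := by
          rw [Real.log_div hAb.ne' hBa.ne', Real.log_mul hApos.ne' hbpos.ne',
            Real.log_mul hBpos.ne' hpos.ne', Real.log_div hApos.ne' hBpos.ne',
            Real.log_div hpos.ne' hbpos.ne']
          ring
        rw [hEq] at hlog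
        have h2 := mul_le_mul_of_nonneg_left hlog hpos.le
        rw [mul_sub] at h2
        have h3 : a i * (A * b i / (B * a i) - 1) = A * b i / B - a i := by
          field_simp
        linarith
    have hsum := Finset.sum_le_sum key
    rw [Finset.sum_sub_distrib, Finset.sum_sub_distrib] at hsum
    have e1 : ∑ x ∈ s, A * b x / B = A := by
      rw [← Finset.sum_div, ← Finset.mul_sum, ← hB]
      field_simp
    have e2 : ∑ i ∈ s, a i * Real.log (A / B) = A * Real.log (A / B) := by
      rw [← Finset.sum_mul, ← hA]
    rw [e1, e2, ← hA] at hsum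
    linarith

/-- Let `{Y_t}` be a stationary process on `Fin K` with joint law
`J i j = P(Y_{t-1} = i, Y_t = j)`, stationary distribution `p i = ∑_j J i j`
(with `0 < p i < 1`), and self-transition probabilities `pii i = J i i / p i`.
With `d` the binary KL divergence, `∑_i p i * d (pii i) (p i) ≤ I(Y_t; Y_{t-1})`. -/
theorem weighted_binary_kl_le_mutual_information {K : ℕ}
    (J : Fin K → Fin K → ℝ)
    (hJ0 : ∀ i j, 0 ≤ J i j) (hJ1 : ∑ i, ∑ j, J i j = 1)
    (p : Fin K → ℝ) (hp : ∀ i, p i = ∑ j, J i j)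
    (hstat : ∀ i, ∑ j, J i j = ∑ j, J j i)
    (hpos : ∀ i, 0 < p i ∧ p i < 1)
    (pii : Fin K → ℝ) (hpii : ∀ i, pii i = J i i / p i)
    (d : ℝ → ℝ → ℝ)
    (hd : ∀ a b, d a b =
      a * Real.log (a / b) + (1 - a) * Real.log ((1 - a) / (1 - b))) :
    ∑ i, p i * d (pii i) (p i) ≤
      ∑ i, ∑ j, J i j * Real.log (J i j / (p i * p j)) := by
  have hpsum : ∑ j, p j = 1 := by
    simp_rw [hp]; exact hJ1
  apply Finset.sum_le_sum
  intro i _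
  obtain ⟨hpi, hpi1⟩ := hpos i
  have hpi0 : p i ≠ 0 := ne_of_gt hpi
  have h1pi : (0:ℝ) < 1 - p i := by linarith
  have hLHS : p i * d (pii i) (p i) =
      J i i * Real.log (J i i / (p i * p i)) +
        (p i - J i i) * Real.log ((p i - J i i) / (p i * (1 - p i))) := by
    rw [hd, hpii]
    have e1 : p i * (J i i / p i) = J i i := by field_simp
    have e2 : J i i / p i / p i = J i i / (p i * p i) := by field_simp
    have e3 : p i * (1 - J i i / p i) = p i - J i i := by field_simp
    have e4 : (1 - J i i / p i) / (1 - p i) = (p i - J i i) / (p i * (1 - p i)) := by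
      rw [div_eq_div_iff (ne_of_gt h1pi) (by positivity)]
      field_simp
    rw [mul_add, ← mul_assoc, e1, e2, ← mul_assoc, e3, e4]
  rw [hLHS]
  rw [← Finset.add_sum_erase _ _ (Finset.mem_univ i)]
  apply add_le_add le_rfl
  have hsa : ∑ j ∈ Finset.univ.erase i, J i j = p i - J i i := by
    have h := Finset.add_sum_erase Finset.univ (fun j => J i j) (Finset.mem_univ i)
    rw [← hp i] at h
    linarith
  have hsb : ∑ j ∈ Finset.univ.erase i, p i * p j = p i * (1 - p i) := by
    rw [← Finset.mul_sum]
    congr 1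
    have h := Finset.add_sum_erase Finset.univ p (Finset.mem_univ i)
    rw [hpsum] at h
    linarith
  have key := log_sum_aux (Finset.univ.erase i) (fun j => J i j) (fun j => p i * p j)
    (fun j _ => hJ0 i j) (fun j _ => mul_pos hpi (hpos j).1)
  rw [hsa, hsb] at key
  exact key
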